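/- Let G be a group and c ∈ G an element with c² = 1. Let R be a commutative local ring with maximal ideal m and residue field k = R/m, in which 2 is invertible. Let ρ, ρ' : G → GL₂(R) be two group homomorphisms such that: the residual representations ρ̄, ρ̄' : G → GL₂(k), obtained by reducing matrix entries modulo m, are both irreducible on k² (no nonzero proper subspace of k² is stable); and det ρ(c) = det ρ'(c) = −1. If trace ρ(g) = trace ρ'(g) for all g ∈ G, then ρ and ρ' are isomorphic: there exists P ∈ GL₂(R) with ρ'(g) = P ρ(g) P⁻¹ for all g ∈ G. -/

import Mathlib

open IsLocalRing Matrix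

set_option linter.unusedSectionVars false
set_option maxHeartbeats 1000000

section

variable {R : Type} [CommRing R] [IsLocalRing R]

lemma isUnit_of_res {x : R} (h : residue R x ≠ 0) : IsUnit x := by
  by_contra hx
  exact h ((IsLocalRing.residue_eq_zero_iff x).mpr
    ((IsLocalRing.mem_maximalIdeal x).mpr hx))

lemma diagonalize (h2 : IsUnit (2 : R)) (M : (Matrix (Fin 2) (Fin 2) R)ˣ)
    (hM : M ^ 2 = 1) (hdet : (M : Matrix (Fin 2) (Fin 2) R).det = -1) :
    ∃ Q : (Matrix (Fin 2) (Fin 2) R)ˣ,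
      (M : Matrix (Fin 2) (Fin 2) R) * (Q : Matrix (Fin 2) (Fin 2) R)
        = (Q : Matrix (Fin 2) (Fin 2) R) * !![1,0;0,-1] := by
  set π := residue R with hπ
  set Mv : Matrix (Fin 2) (Fin 2) R := (M : Matrix (Fin 2) (Fin 2) R) with hMv
  have hM2 : Mv * Mv = 1 := by
    have := congrArg (Units.val) hM
    rwa [sq, Units.val_mul, Units.val_one] at this
  set t : R := ↑h2.unit⁻¹ with htdef
  have ht : (2 : R) * t = 1 := by
    rw [htdef]
    nth_rewrite 1 [← IsUnit.unit_spec h2]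
    exact Units.mul_inv _
  set e : Matrix (Fin 2) (Fin 2) R := t • (1 + Mv) with hedef
  have he : Mv * e = e := by
    rw [hedef, Matrix.mul_smul, mul_add, mul_one, hM2, add_comm]
  set f : Matrix (Fin 2) (Fin 2) R := 1 - e with hfdef
  have h2e : e + e = 1 + Mv := by
    rw [hedef, ← add_smul]
    have htt : t + t = 1 := by rw [← ht]; ring
    rw [htt, one_smul]
  have hf : Mv * f = -f := by
    rw [hfdef, mul_sub, mul_one, he]
    have hme : Mv - e = e - 1 := by
      rw [sub_eq_sub_iff_add_eq_add, add_comm Mv 1, ← h2e]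
    rw [hme, neg_sub]
  -- residue field facts
  have hk2 : π (2 : R) ≠ 0 := (h2.map π).ne_zero
  have htu : IsUnit (π t) :=
    IsUnit.of_mul_eq_one (π 2) (by rw [← _root_.map_mul, mul_comm, ht, _root_.map_one])
  have hdetk : π (Mv 0 0) * π (Mv 1 1) - π (Mv 0 1) * π (Mv 1 0) = -1 := by
    have h := congrArg π hdet
    rw [Matrix.det_fin_two, map_sub, _root_.map_mul, _root_.map_mul, map_neg,
      _root_.map_one] at h
    exact h
  have hne : ¬ ((1:ResidueField R) = -1) := by
    intro h
    apply hk2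
    have h2' : π 2 = π 1 + π 1 := by rw [← map_add]; norm_num
    rw [h2', _root_.map_one]
    linear_combination h
  -- e and f are nonzero mod the maximal ideal
  have hecol : ∃ j i, π (e i j) ≠ 0 := by
    by_contra hall
    push_neg at hall
    have hent : ∀ i j, π ((1 + Mv) i j) = 0 := by
      intro i j
      have h1 := hall j i
      rw [hedef, Matrix.smul_apply, smul_eq_mul, _root_.map_mul] at h1
      exact (htu.mul_right_eq_zero).mp h1
    have h00 : π (Mv 0 0) = -1 := by
      have h := hent 0 0
      rw [Matrix.add_apply, Matrix.one_apply_eq, map_add, _root_.map_one] at h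
      linear_combination h
    have h11 : π (Mv 1 1) = -1 := by
      have h := hent 1 1
      rw [Matrix.add_apply, Matrix.one_apply_eq, map_add, _root_.map_one] at h
      linear_combination h
    have h01 : π (Mv 0 1) = 0 := by
      have h := hent 0 1
      rw [Matrix.add_apply, Matrix.one_apply_ne (by decide), map_add, map_zero] at h
      linear_combination h
    have h10 : π (Mv 1 0) = 0 := by
      have h := hent 1 0
      rw [Matrix.add_apply, Matrix.one_apply_ne (by decide), map_add, map_zero] at h
      linear_combination h
    rw [h00, h11, h01, h10] at hdetk
    exact hne (by linear_combination hdetk)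
  have hfcol : ∃ j i, π (f i j) ≠ 0 := by
    by_contra hall
    push_neg at hall
    have hent : ∀ i j, π (Mv i j) = π ((1 : Matrix (Fin 2) (Fin 2) R) i j) := by
      intro i j
      have h1 := hall j i
      rw [hfdef, Matrix.sub_apply, map_sub, sub_eq_zero] at h1
      -- h1 : π (1 i j) = π (e i j)
      have h2' : π (e i j) = π t * (π ((1:Matrix (Fin 2) (Fin 2) R) i j) + π (Mv i j)) := by
        rw [hedef, Matrix.smul_apply, smul_eq_mul, _root_.map_mul, Matrix.add_apply, map_add]
      -- so (1 - t)·1ij = t·Mij ; multiply by 2: 2·1ij - 1·1ij = 1·Mij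
      have key : π ((1:Matrix (Fin 2) (Fin 2) R) i j) = π (Mv i j) := by
        have h3 : π 2 * π ((1:Matrix (Fin 2) (Fin 2) R) i j)
            = π 2 * (π t * (π ((1:Matrix (Fin 2) (Fin 2) R) i j) + π (Mv i j))) := by
          rw [← h2', ← h1]
        have h4 : π 2 * π t = 1 := by rw [← _root_.map_mul, ht, _root_.map_one]
        have h5 : π 2 = 1 + 1 := by
          have : (2:R) = 1 + 1 := by norm_num
          rw [this, map_add, _root_.map_one]
        rw [← mul_assoc, h4, one_mul, h5] at h3
        linear_combination h3
      rw [← key]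
    have h00 : π (Mv 0 0) = 1 := by
      have h := hent 0 0; rwa [Matrix.one_apply_eq, _root_.map_one] at h
    have h11 : π (Mv 1 1) = 1 := by
      have h := hent 1 1; rwa [Matrix.one_apply_eq, _root_.map_one] at h
    have h01 : π (Mv 0 1) = 0 := by
      have h := hent 0 1; rwa [Matrix.one_apply_ne (by decide), map_zero] at h
    have h10 : π (Mv 1 0) = 0 := by
      have h := hent 1 0; rwa [Matrix.one_apply_ne (by decide), map_zero] at h
    rw [h00, h11, h01, h10] at hdetk
    exact hne (by linear_combination hdetk)
  obtain ⟨jv, hjv⟩ := hecol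
  obtain ⟨jw, hjw⟩ := hfcol
  set v : Fin 2 → R := fun i => e i jv with hvdef
  set w : Fin 2 → R := fun i => f i jw with hwdef
  have hv : ∀ i, Mv i 0 * v 0 + Mv i 1 * v 1 = v i := by
    intro i
    have h := congrFun (congrFun he i) jv
    rw [Matrix.mul_apply, Fin.sum_univ_two] at h
    exact h
  have hw : ∀ i, Mv i 0 * w 0 + Mv i 1 * w 1 = -w i := by
    intro i
    have h := congrFun (congrFun hf i) jw
    rw [Matrix.mul_apply, Fin.sum_univ_two] at h
    simpa using h
  -- Q is invertible
  have hdetQ : IsUnit (!![v 0, w 0; v 1, w 1]).det := by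
    apply isUnit_of_res
    rw [Matrix.det_fin_two_of, map_sub, _root_.map_mul, _root_.map_mul]
    intro habs
    have hVne : π (v 0) ≠ 0 ∨ π (v 1) ≠ 0 := by
      obtain ⟨i, hi⟩ := hjv
      fin_cases i
      exacts [Or.inl hi, Or.inr hi]
    have hWne : π (w 0) ≠ 0 ∨ π (w 1) ≠ 0 := by
      obtain ⟨i, hi⟩ := hjw
      fin_cases i
      exacts [Or.inl hi, Or.inr hi]
    have hVr : ∀ i, π (Mv i 0) * π (v 0) + π (Mv i 1) * π (v 1) = π (v i) := by
      intro i
      have h := congrArg π (hv i)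
      rw [map_add, _root_.map_mul, _root_.map_mul] at h
      exact h
    have hWr : ∀ i, π (Mv i 0) * π (w 0) + π (Mv i 1) * π (w 1) = -π (w i) := by
      intro i
      have h := congrArg π (hw i)
      rw [map_add, _root_.map_mul, _root_.map_mul, map_neg] at h
      exact h
    have hdep : ∃ u : ResidueField R, π (w 0) = u * π (v 0) ∧ π (w 1) = u * π (v 1) := by
      rcases hVne with hV0 | hV1
      · refine ⟨π (w 0) / π (v 0), (div_mul_cancel₀ _ hV0).symm, ?_⟩
        rw [div_mul_eq_mul_div, eq_div_iff hV0]
        linear_combination habs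
      · refine ⟨π (w 1) / π (v 1), ?_, (div_mul_cancel₀ _ hV1).symm⟩
        rw [div_mul_eq_mul_div, eq_div_iff hV1]
        linear_combination -habs
    obtain ⟨u, hu0, hu1⟩ := hdep
    have h2k : (2 : ResidueField R) ≠ 0 := by
      intro hk; apply hne; linear_combination hk
    have hWzero : ∀ i, π (w i) = 0 := by
      intro i
      have hWi : π (w i) = u * π (v i) := by fin_cases i <;> assumption
      have h := hWr i
      rw [hu0, hu1, hWi] at h
      have hvv := hVr i
      have h2' : (2 : ResidueField R) * (u * π (v i)) = 0 := by
        linear_combination h - u * hvv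
      rw [hWi]
      exact (mul_eq_zero.mp h2').resolve_left h2k
    rcases hWne with h | h
    exacts [h (hWzero 0), h (hWzero 1)]
  have hQu : IsUnit (!![v 0, w 0; v 1, w 1]) :=
    (Matrix.isUnit_iff_isUnit_det _).mpr hdetQ
  refine ⟨hQu.unit, ?_⟩
  rw [IsUnit.unit_spec]
  have hv0 := hv 0; have hv1 := hv 1; have hw0 := hw 0; have hw1 := hw 1
  ext i j
  fin_cases i <;> fin_cases j <;>
    simp [Matrix.mul_apply, Fin.sum_univ_two]
  · linear_combination hv0
  · linear_combination hw0
  · linear_combination hv1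
  · linear_combination hw1

-- transport of irreducibility under conjugation, over the residue field
lemma mulVec_inj {K : Type} [Field K] (u : (Matrix (Fin 2) (Fin 2) K)ˣ)
    {x y : Fin 2 → K} (h : (u : Matrix (Fin 2) (Fin 2) K).mulVec x
      = (u : Matrix (Fin 2) (Fin 2) K).mulVec y) : x = y := by
  have := congrArg ((u⁻¹ : (Matrix (Fin 2) (Fin 2) K)ˣ) : Matrix (Fin 2) (Fin 2) K).mulVec h
  rwa [Matrix.mulVec_mulVec, Matrix.mulVec_mulVec, ← Units.val_mul, inv_mul_cancel,
    Units.val_one, Matrix.one_mulVec, Matrix.one_mulVec] at this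

lemma exists_entry_ne {K : Type} [Field K] {G : Type}
    (ρb : G → (Matrix (Fin 2) (Fin 2) K)ˣ)
    (hres : ∀ W : Submodule K (Fin 2 → K),
      (∀ g : G, ∀ x ∈ W, ((ρb g : Matrix (Fin 2) (Fin 2) K)).mulVec x ∈ W) →
      W = ⊥ ∨ W = ⊤)
    (Qk : (Matrix (Fin 2) (Fin 2) K)ˣ) :
    (∃ g, ((Qk⁻¹ * ρb g * Qk : (Matrix (Fin 2) (Fin 2) K)ˣ) :
        Matrix (Fin 2) (Fin 2) K) 0 1 ≠ 0) ∧
    (∃ g, ((Qk⁻¹ * ρb g * Qk : (Matrix (Fin 2) (Fin 2) K)ˣ) :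
        Matrix (Fin 2) (Fin 2) K) 1 0 ≠ 0) := by
  set N : G → Matrix (Fin 2) (Fin 2) K :=
    fun g => ((Qk⁻¹ * ρb g * Qk : (Matrix (Fin 2) (Fin 2) K)ˣ) : Matrix (Fin 2) (Fin 2) K)
    with hN
  have hQN : ∀ g, (ρb g : Matrix (Fin 2) (Fin 2) K) * Qk = (Qk : Matrix (Fin 2) (Fin 2) K) * N g := by
    intro g
    rw [hN]
    have : (ρb g) * Qk = Qk * (Qk⁻¹ * ρb g * Qk) := by group
    rw [← Units.val_mul, ← Units.val_mul, this]
  constructor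
  · by_contra hall
    push_neg at hall
    set z : Fin 2 → K := ![0, 1] with hz
    set W : Submodule K (Fin 2 → K) :=
      (Submodule.span K {z}).map ((Qk : Matrix (Fin 2) (Fin 2) K).mulVecLin) with hW
    have hstab : ∀ g : G, ∀ x ∈ W, ((ρb g : Matrix (Fin 2) (Fin 2) K)).mulVec x ∈ W := by
      intro g x hx
      obtain ⟨y, hy, rfl⟩ := hx
      obtain ⟨t, rfl⟩ := Submodule.mem_span_singleton.mp hy
      refine ⟨(N g).mulVec (t • z), ?_, ?_⟩
      · apply Submodule.mem_span_singleton.mpr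
        refine ⟨t * (N g 1 1), ?_⟩
        rw [Matrix.mulVec_smul]
        have hall' : N g 0 1 = 0 := hall g
        have : (N g).mulVec z = (N g 1 1) • z := by
          funext i
          fin_cases i
          · simpa [hz, Matrix.mulVec, dotProduct, Fin.sum_univ_two] using hall'
          · simp [hz, Matrix.mulVec, dotProduct, Fin.sum_univ_two]
        rw [this]
        rw [smul_smul]
      · simp only [Matrix.mulVecLin_apply]
        rw [Matrix.mulVec_mulVec, Matrix.mulVec_mulVec, hQN]
    rcases hres W hstab with hbot | htop
    · have hmem : (Qk : Matrix (Fin 2) (Fin 2) K).mulVec z ∈ W :=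
        ⟨z, Submodule.mem_span_singleton_self z, rfl⟩
      rw [hbot] at hmem
      have : z = 0 := by
        apply mulVec_inj Qk
        rw [(Submodule.mem_bot K).mp hmem, Matrix.mulVec_zero]
      have := congrFun this 1
      simp [hz] at this
    · have hmem : (Qk : Matrix (Fin 2) (Fin 2) K).mulVec ![1, 0] ∈ W := by
        rw [htop]; trivial
      obtain ⟨y, hy, hy2⟩ := hmem
      obtain ⟨t, rfl⟩ := Submodule.mem_span_singleton.mp hy
      have := mulVec_inj Qk hy2
      have := congrFun this 0
      simp [hz] at this
  · by_contra hall
    push_neg at hall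
    set z : Fin 2 → K := ![1, 0] with hz
    set W : Submodule K (Fin 2 → K) :=
      (Submodule.span K {z}).map ((Qk : Matrix (Fin 2) (Fin 2) K).mulVecLin) with hW
    have hstab : ∀ g : G, ∀ x ∈ W, ((ρb g : Matrix (Fin 2) (Fin 2) K)).mulVec x ∈ W := by
      intro g x hx
      obtain ⟨y, hy, rfl⟩ := hx
      obtain ⟨t, rfl⟩ := Submodule.mem_span_singleton.mp hy
      refine ⟨(N g).mulVec (t • z), ?_, ?_⟩
      · apply Submodule.mem_span_singleton.mpr
        refine ⟨t * (N g 0 0), ?_⟩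
        rw [Matrix.mulVec_smul]
        have hall' : N g 1 0 = 0 := hall g
        have : (N g).mulVec z = (N g 0 0) • z := by
          funext i
          fin_cases i
          · simp [hz, Matrix.mulVec, dotProduct, Fin.sum_univ_two]
          · simpa [hz, Matrix.mulVec, dotProduct, Fin.sum_univ_two] using hall'
        rw [this]
        rw [smul_smul]
      · simp only [Matrix.mulVecLin_apply]
        rw [Matrix.mulVec_mulVec, Matrix.mulVec_mulVec, hQN]
    rcases hres W hstab with hbot | htop
    · have hmem : (Qk : Matrix (Fin 2) (Fin 2) K).mulVec z ∈ W :=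
        ⟨z, Submodule.mem_span_singleton_self z, rfl⟩
      rw [hbot] at hmem
      have : z = 0 := by
        apply mulVec_inj Qk
        rw [(Submodule.mem_bot K).mp hmem, Matrix.mulVec_zero]
      have := congrFun this 0
      simp [hz] at this
    · have hmem : (Qk : Matrix (Fin 2) (Fin 2) K).mulVec ![0, 1] ∈ W := by
        rw [htop]; trivial
      obtain ⟨y, hy, hy2⟩ := hmem
      obtain ⟨t, rfl⟩ := Submodule.mem_span_singleton.mp hy
      have := mulVec_inj Qk hy2
      have := congrFun this 1
      simp [hz] at this

end


/-- Let `G` be a group with `c² = 1`, `R` a commutative local ring in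
which `2` is invertible, and `ρ, ρ' : G → GL₂(R)` with irreducible residual
representations and `det ρ(c) = det ρ'(c) = −1`.  If `ρ` and `ρ'` have the same traces,
they are conjugate by an element of `GL₂(R)`. -/
theorem conjugate_of_trace_eq
    (G : Type) [Group G] (c : G) (hc : c ^ 2 = 1)
    (R : Type) [CommRing R] [IsLocalRing R] (h2 : IsUnit (2 : R))
    (ρ ρ' : G →* Matrix.GeneralLinearGroup (Fin 2) R)
    -- the residual representations are irreducible
    (hres : ∀ W : Submodule (ResidueField R) (Fin 2 → ResidueField R),
      (∀ g : G, ∀ x ∈ W,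
        ((Units.map ((residue R).mapMatrix.toMonoidHom) (ρ g) :
          Matrix (Fin 2) (Fin 2) (ResidueField R))).mulVec x ∈ W) →
      W = ⊥ ∨ W = ⊤)
    (hres' : ∀ W : Submodule (ResidueField R) (Fin 2 → ResidueField R),
      (∀ g : G, ∀ x ∈ W,
        ((Units.map ((residue R).mapMatrix.toMonoidHom) (ρ' g) :
          Matrix (Fin 2) (Fin 2) (ResidueField R))).mulVec x ∈ W) →
      W = ⊥ ∨ W = ⊤)
    -- `det ρ(c) = det ρ'(c) = −1`
    (hdet : (ρ c : Matrix (Fin 2) (Fin 2) R).det = -1)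
    (hdet' : (ρ' c : Matrix (Fin 2) (Fin 2) R).det = -1)
    -- the traces agree
    (htr : ∀ g : G, (ρ g : Matrix (Fin 2) (Fin 2) R).trace =
      (ρ' g : Matrix (Fin 2) (Fin 2) R).trace) :
    ∃ P : Matrix.GeneralLinearGroup (Fin 2) R, ∀ g : G, ρ' g = P * ρ g * P⁻¹ := by
  classical
  have hc2 : ρ c ^ 2 = 1 := by rw [← _root_.map_pow, hc, _root_.map_one]
  have hc2' : ρ' c ^ 2 = 1 := by rw [← _root_.map_pow, hc, _root_.map_one]
  obtain ⟨Q, hQ⟩ := diagonalize h2 (ρ c) hc2 hdet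
  obtain ⟨Q', hQ'⟩ := diagonalize h2 (ρ' c) hc2' hdet'
  set Dm : Matrix (Fin 2) (Fin 2) R := !![1,0;0,-1] with hDm
  have hD00 : Dm 0 0 = 1 := rfl
  have hD01 : Dm 0 1 = 0 := rfl
  have hD10 : Dm 1 0 = 0 := rfl
  have hD11 : Dm 1 1 = -1 := rfl
  set u : G → (Matrix (Fin 2) (Fin 2) R)ˣ := fun g => Q⁻¹ * ρ g * Q with hu
  set u' : G → (Matrix (Fin 2) (Fin 2) R)ˣ := fun g => Q'⁻¹ * ρ' g * Q' with hu'
  have humul : ∀ g h : G, u (g * h) = u g * u h := by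
    intro g h; simp only [hu, _root_.map_mul]; group
  have humul' : ∀ g h : G, u' (g * h) = u' g * u' h := by
    intro g h; simp only [hu', _root_.map_mul]; group
  have huc : (u c : Matrix (Fin 2) (Fin 2) R) = Dm := by
    simp only [hu]
    rw [Units.val_mul, Units.val_mul, mul_assoc, hQ, ← mul_assoc, ← Units.val_mul,
      inv_mul_cancel, Units.val_one, one_mul]
  have huc' : (u' c : Matrix (Fin 2) (Fin 2) R) = Dm := by
    simp only [hu']
    rw [Units.val_mul, Units.val_mul, mul_assoc, hQ', ← mul_assoc, ← Units.val_mul,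
      inv_mul_cancel, Units.val_one, one_mul]
  set a : G → R := fun g => (u g : Matrix (Fin 2) (Fin 2) R) 0 0 with ha
  set b : G → R := fun g => (u g : Matrix (Fin 2) (Fin 2) R) 0 1 with hb
  set cc : G → R := fun g => (u g : Matrix (Fin 2) (Fin 2) R) 1 0 with hccd
  set d : G → R := fun g => (u g : Matrix (Fin 2) (Fin 2) R) 1 1 with hd
  set a' : G → R := fun g => (u' g : Matrix (Fin 2) (Fin 2) R) 0 0 with ha'
  set b' : G → R := fun g => (u' g : Matrix (Fin 2) (Fin 2) R) 0 1 with hb'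
  set cc' : G → R := fun g => (u' g : Matrix (Fin 2) (Fin 2) R) 1 0 with hccd'
  set d' : G → R := fun g => (u' g : Matrix (Fin 2) (Fin 2) R) 1 1 with hd'
  have trS : ∀ g : G, (u g : Matrix (Fin 2) (Fin 2) R).trace
      = (u' g : Matrix (Fin 2) (Fin 2) R).trace := by
    intro g
    simp only [hu, hu', Units.val_mul]
    rw [Matrix.trace_mul_comm, ← mul_assoc, ← Units.val_mul, mul_inv_cancel,
      Units.val_one, one_mul]
    rw [Matrix.trace_mul_comm, ← mul_assoc, ← Units.val_mul, mul_inv_cancel,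
      Units.val_one, one_mul]
    exact htr g
  have hgc : ∀ g : G, (u (g*c) : Matrix (Fin 2) (Fin 2) R)
      = (u g : Matrix (Fin 2) (Fin 2) R) * Dm := by
    intro g; rw [humul, Units.val_mul, huc]
  have hgc' : ∀ g : G, (u' (g*c) : Matrix (Fin 2) (Fin 2) R)
      = (u' g : Matrix (Fin 2) (Fin 2) R) * Dm := by
    intro g; rw [humul', Units.val_mul, huc']
  have EA : ∀ g : G, (2:R) * a g = (u g : Matrix (Fin 2) (Fin 2) R).trace
      + (u (g*c) : Matrix (Fin 2) (Fin 2) R).trace := by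
    intro g
    rw [hgc, Matrix.trace_fin_two, Matrix.trace_fin_two]
    simp only [ha, Matrix.mul_apply, Fin.sum_univ_two, Matrix.cons_val', Matrix.cons_val_zero,
      Matrix.cons_val_one, Matrix.head_cons, Matrix.empty_val', Matrix.cons_val_fin_one,
      Matrix.head_fin_const, hD00, hD01, hD10, hD11]
    ring
  have EA' : ∀ g : G, (2:R) * a' g = (u' g : Matrix (Fin 2) (Fin 2) R).trace
      + (u' (g*c) : Matrix (Fin 2) (Fin 2) R).trace := by
    intro g
    rw [hgc', Matrix.trace_fin_two, Matrix.trace_fin_two]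
    simp only [ha', Matrix.mul_apply, Fin.sum_univ_two, Matrix.cons_val', Matrix.cons_val_zero,
      Matrix.cons_val_one, Matrix.head_cons, Matrix.empty_val', Matrix.cons_val_fin_one,
      Matrix.head_fin_const, hD00, hD01, hD10, hD11]
    ring
  have ED : ∀ g : G, (2:R) * d g = (u g : Matrix (Fin 2) (Fin 2) R).trace
      - (u (g*c) : Matrix (Fin 2) (Fin 2) R).trace := by
    intro g
    rw [hgc, Matrix.trace_fin_two, Matrix.trace_fin_two]
    simp only [hd, Matrix.mul_apply, Fin.sum_univ_two, Matrix.cons_val', Matrix.cons_val_zero,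
      Matrix.cons_val_one, Matrix.head_cons, Matrix.empty_val', Matrix.cons_val_fin_one,
      Matrix.head_fin_const, hD00, hD01, hD10, hD11]
    ring
  have ED' : ∀ g : G, (2:R) * d' g = (u' g : Matrix (Fin 2) (Fin 2) R).trace
      - (u' (g*c) : Matrix (Fin 2) (Fin 2) R).trace := by
    intro g
    rw [hgc', Matrix.trace_fin_two, Matrix.trace_fin_two]
    simp only [hd', Matrix.mul_apply, Fin.sum_univ_two, Matrix.cons_val', Matrix.cons_val_zero,
      Matrix.cons_val_one, Matrix.head_cons, Matrix.empty_val', Matrix.cons_val_fin_one,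
      Matrix.head_fin_const, hD00, hD01, hD10, hD11]
    ring
  have haa : ∀ g : G, a' g = a g := by
    intro g
    apply h2.mul_left_cancel
    rw [EA' g, ← trS g, ← trS (g*c)]
    exact (EA g).symm
  have hdd : ∀ g : G, d' g = d g := by
    intro g
    apply h2.mul_left_cancel
    rw [ED' g, ← trS g, ← trS (g*c)]
    exact (ED g).symm
  have EK : ∀ g h : G, (2:R) * (a g * a h + b g * cc h)
      = (u (g*h) : Matrix (Fin 2) (Fin 2) R).trace
        + (u (g*h*c) : Matrix (Fin 2) (Fin 2) R).trace := by
    intro g h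
    have e1 : (u (g*h) : Matrix (Fin 2) (Fin 2) R)
        = (u g : Matrix (Fin 2) (Fin 2) R) * (u h : Matrix (Fin 2) (Fin 2) R) := by
      rw [humul, Units.val_mul]
    rw [hgc (g*h), e1, Matrix.trace_fin_two, Matrix.trace_fin_two]
    simp only [ha, hb, hccd, Matrix.mul_apply, Fin.sum_univ_two, Matrix.cons_val',
      Matrix.cons_val_zero, Matrix.cons_val_one, Matrix.head_cons, Matrix.empty_val',
      Matrix.cons_val_fin_one, Matrix.head_fin_const, hD00, hD01, hD10, hD11]
    ring
  have EK' : ∀ g h : G, (2:R) * (a' g * a' h + b' g * cc' h)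
      = (u' (g*h) : Matrix (Fin 2) (Fin 2) R).trace
        + (u' (g*h*c) : Matrix (Fin 2) (Fin 2) R).trace := by
    intro g h
    have e1 : (u' (g*h) : Matrix (Fin 2) (Fin 2) R)
        = (u' g : Matrix (Fin 2) (Fin 2) R) * (u' h : Matrix (Fin 2) (Fin 2) R) := by
      rw [humul', Units.val_mul]
    rw [hgc' (g*h), e1, Matrix.trace_fin_two, Matrix.trace_fin_two]
    simp only [ha', hb', hccd', Matrix.mul_apply, Fin.sum_univ_two, Matrix.cons_val',
      Matrix.cons_val_zero, Matrix.cons_val_one, Matrix.head_cons, Matrix.empty_val',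
      Matrix.cons_val_fin_one, Matrix.head_fin_const, hD00, hD01, hD10, hD11]
    ring
  have key : ∀ g h : G, b g * cc h = b' g * cc' h := by
    intro g h
    have h1 : (2:R) * (a g * a h + b g * cc h) = 2 * (a' g * a' h + b' g * cc' h) := by
      rw [EK g h, EK' g h, trS (g*h), trS (g*h*c)]
    have h2' := h2.mul_left_cancel h1
    rw [haa g, haa h] at h2'
    linear_combination h2'
  -- irreducibility gives unit entries
  obtain ⟨⟨g₀, hg₀⟩, ⟨h₀, hh₀⟩⟩ := exists_entry_ne
    (fun g => Units.map ((residue R).mapMatrix.toMonoidHom) (ρ g)) hres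
    (Units.map ((residue R).mapMatrix.toMonoidHom) Q)
  set φ : (Matrix (Fin 2) (Fin 2) R)ˣ →* (Matrix (Fin 2) (Fin 2) (ResidueField R))ˣ :=
    Units.map ((residue R).mapMatrix.toMonoidHom) with hφ
  have hφu : ∀ g : G, φ (u g) = (φ Q)⁻¹ * φ (ρ g) * (φ Q) := by
    intro g; simp only [hu, _root_.map_mul, _root_.map_inv]
  have hcoe : ∀ (X : (Matrix (Fin 2) (Fin 2) R)ˣ) (i j : Fin 2),
      (φ X : Matrix (Fin 2) (Fin 2) (ResidueField R)) i j
        = residue R ((X : Matrix (Fin 2) (Fin 2) R) i j) := by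
    intro X i j
    rfl
  have hbu : IsUnit (b g₀) := by
    apply isUnit_of_res
    simp only [hb]
    rw [← hcoe (u g₀) 0 1, hφu]
    exact hg₀
  have hcu : IsUnit (cc h₀) := by
    apply isUnit_of_res
    simp only [hccd]
    rw [← hcoe (u h₀) 1 0, hφu]
    exact hh₀
  have hbcu : IsUnit (b' g₀ * cc' h₀) := by rw [← key]; exact hbu.mul hcu
  have hbu' : IsUnit (b' g₀) := isUnit_of_mul_isUnit_left hbcu
  have hcu' : IsUnit (cc' h₀) := isUnit_of_mul_isUnit_right hbcu
  set s : Rˣ := hbu'.unit * hbu.unit⁻¹ with hs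
  have hsv : (s : R) * b g₀ = b' g₀ := by
    rw [hs, Units.val_mul, mul_assoc]
    nth_rewrite 2 [← hbu.unit_spec]
    rw [Units.inv_mul, mul_one, hbu'.unit_spec]
  have hbs : ∀ g : G, b' g = (s : R) * b g := by
    intro g
    have star : b' g * b g₀ = b g * b' g₀ := by
      apply hcu'.mul_right_cancel
      have h1 : b g₀ * (b g * cc h₀) = b g₀ * (b' g * cc' h₀) := by rw [key g h₀]
      have h2' : b g * (b g₀ * cc h₀) = b g * (b' g₀ * cc' h₀) := by rw [key g₀ h₀]
      linear_combination h2' - h1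
    apply hbu.mul_right_cancel
    rw [star, ← hsv]
    ring
  have hcs : ∀ g : G, cc g = (s : R) * cc' g := by
    intro g
    apply hbu.mul_left_cancel
    rw [key g₀ g, ← hsv]
    ring
  -- the diagonal conjugating matrix
  have hdetP : IsUnit (!![(s:R),0;0,1]).det := by
    rw [Matrix.det_fin_two_of]
    simpa using s.isUnit
  have hPu : IsUnit (!![(s:R),0;0,1]) := (Matrix.isUnit_iff_isUnit_det _).mpr hdetP
  have hcomm : ∀ g : G, u' g * hPu.unit = hPu.unit * u g := by
    intro g
    have hAa := haa g; have hBb := hbs g; have hCc := hcs g; have hDd := hdd g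
    simp only [ha, ha', hb, hb', hccd, hccd', hd, hd'] at hAa hBb hCc hDd
    apply Units.ext
    rw [Units.val_mul (a := u' g) (b := hPu.unit), Units.val_mul (a := hPu.unit) (b := u g),
      hPu.unit_spec]
    have hP00 : (!![(s:R),0;0,1]) 0 0 = (s:R) := rfl
    have hP01 : (!![(s:R),0;0,1]) 0 1 = 0 := rfl
    have hP10 : (!![(s:R),0;0,1]) 1 0 = 0 := rfl
    have hP11 : (!![(s:R),0;0,1]) 1 1 = 1 := rfl
    ext i j
    fin_cases i <;> fin_cases j
    · simp [Matrix.mul_apply, Fin.sum_univ_two]; linear_combination hAa * (s : R)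
    · simp [Matrix.mul_apply, Fin.sum_univ_two]; linear_combination hBb
    · simp [Matrix.mul_apply, Fin.sum_univ_two]; linear_combination -hCc
    · simp [Matrix.mul_apply, Fin.sum_univ_two]; linear_combination hDd
  refine ⟨Q' * hPu.unit * Q⁻¹, fun g => ?_⟩
  have h1 : u' g = hPu.unit * u g * hPu.unit⁻¹ := by
    rw [← hcomm g]; group
  have h2' : ρ' g = Q' * u' g * Q'⁻¹ := by simp only [hu']; group
  rw [h2', h1]
  simp only [hu]
  group
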